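/- arXiv:1607.07761 — 2 statements merged into one kernel-verified Lean document; each statement's English description precedes it below -/
import Mathlib

section
/- For the n-dimensional hypercube Q_n and any integer m with 2 ≤ m ≤ n+1, the minimum m-vertex boundary number satisfies b_v(m; Q_n) = −m²/2 + (n − 1/2)m + 1. -/
set_option linter.unusedSectionVars false
set_option maxHeartbeats 1000000

section Helpers
variable {ι : Type} [Fintype ι] [DecidableEq ι]

def bdry (H : Finset (ι → Bool)) : Finset (ι → Bool) :=
  Finset.univ.filter (fun v => v ∉ H ∧ ∃ u ∈ H, hammingDist u v = 1)

lemma hamming_card (u v : ι → Bool) :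
    hammingDist u v = (Finset.univ.filter fun i => u i ≠ v i).card := rfl

lemma exists_single_coord {u v : ι → Bool} (h : hammingDist u v = 1) :
    ∃ j, u j ≠ v j ∧ ∀ k, k ≠ j → u k = v k := by
  rw [hamming_card, Finset.card_eq_one] at h
  obtain ⟨j, hj⟩ := h
  have hmem : ∀ k, (u k ≠ v k) ↔ k ∈ ({j} : Finset ι) := by
    intro k
    rw [← hj]
    simp
  refine ⟨j, ?_, ?_⟩
  · have := (hmem j).2 (Finset.mem_singleton_self j); exact this
  · intro k hk
    by_contra hne
    exact hk (Finset.mem_singleton.1 ((hmem k).1 hne))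

lemma hamming_one_update {x : ι → Bool} (i : ι) :
    hammingDist x (Function.update x i (!x i)) = 1 := by
  rw [hamming_card]
  have : (Finset.univ.filter fun k => x k ≠ Function.update x i (!x i) k) = {i} := by
    ext k
    simp only [Finset.mem_filter, Finset.mem_univ, true_and, Finset.mem_singleton]
    constructor
    · intro hk
      by_contra hne
      rw [Function.update_of_ne hne] at hk
      exact hk rfl
    · rintro rfl
      rw [Function.update_self]
      intro hk
      exact Bool.not_ne_self (x k) hk.symm
  rw [this, Finset.card_singleton]

lemma singleton_bdry (x : ι → Bool) :
    Fintype.card ι ≤ (bdry ({x} : Finset (ι → Bool))).card := by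
  classical
  have h := Finset.card_le_card_of_injOn (f := fun i => Function.update x i (!x i))
    (s := (Finset.univ : Finset ι)) (t := bdry {x}) ?_ ?_
  · simpa using h
  · intro i _
    simp only [bdry, Finset.mem_coe, Finset.mem_filter, Finset.mem_univ, true_and]
    constructor
    · simp only [Finset.mem_singleton]
      intro hEq
      have := congrFun hEq i
      simp at this
    · exact ⟨x, Finset.mem_singleton_self x, hamming_one_update i⟩
  · intro i _ j _ hEq
    by_contra hne
    have h1 := congrFun hEq i
    simp only [Function.update_self, Function.update_of_ne hne] at h1
    exact Bool.not_ne_self (x i) h1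

lemma hamming_res (i : ι) (u v : ι → Bool) (h : u i = v i) :
    hammingDist (fun j : {j : ι // j ≠ i} => u j) (fun j : {j : ι // j ≠ i} => v j)
      = hammingDist u v := by
  rw [hamming_card, hamming_card]
  apply Finset.card_bij (fun (j : {j : ι // j ≠ i}) _ => (j : ι))
  · intro a ha
    simp only [Finset.mem_filter, Finset.mem_univ, true_and] at ha ⊢
    exact ha
  · intro a _ b _ hab
    exact Subtype.ext hab
  · intro k hk
    simp only [Finset.mem_filter, Finset.mem_univ, true_and] at hk
    have hki : k ≠ i := by rintro rfl; exact hk h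
    exact ⟨⟨k, hki⟩, by simpa using hk, rfl⟩


lemma res_ext (i : ι) (c : Bool) (w : {j : ι // j ≠ i} → Bool) :
    (fun j : {j : ι // j ≠ i} => (fun k => if h : k = i then c else w ⟨k, h⟩) j.val) = w := by
  funext j
  simp only [dif_neg j.2]

lemma ext_bdry (i : ι) (H : Finset (ι → Bool)) (c : Bool)
    (w : {j : ι // j ≠ i} → Bool)
    (hw : w ∈ bdry ((H.filter (fun v => v i = c)).image
      (fun v (j : {j : ι // j ≠ i}) => v j.val))) :
    (fun k => if h : k = i then c else w ⟨k, h⟩) ∈ bdry H := by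
  simp only [bdry, Finset.mem_filter, Finset.mem_univ, true_and] at hw ⊢
  obtain ⟨hw1, u', hu', hdist⟩ := hw
  set e : ι → Bool := fun k => if h : k = i then c else w ⟨k, h⟩ with he
  have hei : e i = c := by simp [he]
  constructor
  · intro heH
    apply hw1
    rw [Finset.mem_image]
    refine ⟨e, ?_, res_ext i c w⟩
    rw [Finset.mem_filter]
    exact ⟨heH, hei⟩
  · obtain ⟨u, huH, rfl⟩ := Finset.mem_image.1 hu'
    rw [Finset.mem_filter] at huH
    refine ⟨u, huH.1, ?_⟩
    rw [← hamming_res i u e (by rw [hei, huH.2])]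
    have : (fun j : {j : ι // j ≠ i} => e j.val) = w := res_ext i c w
    rw [this]
    exact hdist
end Helpers

lemma lower_bound (n : ℕ) : ∀ (ι : Type) (_ : Fintype ι) (_ : DecidableEq ι)
    (H : Finset (ι → Bool)), Fintype.card ι = n → 1 ≤ H.card → H.card ≤ n + 1 →
    2 * H.card * n ≤ (H.card + 2) * (H.card - 1) + 2 * (bdry H).card := by
  induction n using Nat.strong_induction_on with
  | _ n IH =>
    intro ι _ _ H hn h1 h2
    rcases eq_or_lt_of_le h1 with hm1 | hm2
    · obtain ⟨x, hx⟩ := Finset.card_eq_one.1 hm1.symm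
      subst hx
      have := singleton_bdry (ι := ι) x
      simp only [Finset.card_singleton]
      omega
    · obtain ⟨x, hxH, y, hyH, hxy⟩ := Finset.one_lt_card.1 hm2
      have : ∃ i, x i ≠ y i := by
        by_contra hc; push_neg at hc; exact hxy (funext hc)
      obtain ⟨i, hi⟩ := this
      have hn1 : 1 ≤ n := by rw [← hn]; exact Fintype.card_pos_iff.2 ⟨i⟩
      have hcard' : Fintype.card {j : ι // j ≠ i} = n - 1 := by
        have : Fintype.card {j : ι // j ≠ i} = Fintype.card ι - 1 := by
          simp [Fintype.card_subtype_compl]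
        rw [this, hn]
      -- split H
      set res : (ι → Bool) → ({j : ι // j ≠ i} → Bool) := fun v j => v j.val with hres
      have resInj : ∀ c : Bool, ∀ u ∈ H.filter (fun v => v i = c),
          ∀ w ∈ H.filter (fun v => v i = c), res u = res w → u = w := by
        intro c u hu w hw huw
        rw [Finset.mem_filter] at hu hw
        funext k
        by_cases hk : k = i
        · subst hk; rw [hu.2, hw.2]
        · exact congrFun huw ⟨k, hk⟩
      set H0 := H.filter (fun v => v i = false) with hH0
      set H1 := H.filter (fun v => v i = true) with hH1
      have hsplit : H0.card + H1.card = H.card := by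
        have htot := Finset.card_filter_add_card_filter_not (s := H)
          (p := fun v => v i = false)
        have hEq : H.filter (fun v => ¬ (v i = false)) = H1 := by
          rw [hH1]
          apply Finset.filter_congr
          intro v _
          simp
        rw [hH0, ← hEq]
        exact htot
      have hxyH : ∀ c : Bool, 1 ≤ (H.filter (fun v => v i = c)).card := by
        intro c
        apply Finset.card_pos.2
        by_cases hxc : x i = c
        · exact ⟨x, Finset.mem_filter.2 ⟨hxH, hxc⟩⟩
        · refine ⟨y, Finset.mem_filter.2 ⟨hyH, ?_⟩⟩
          revert hi hxc
          cases (x i) <;> cases (y i) <;> cases c <;> simp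
      have ha : 1 ≤ H0.card := hxyH false
      have hb : 1 ≤ H1.card := hxyH true
      set H0' := H0.image res with hH0'
      set H1' := H1.image res with hH1'
      have hc0 : H0'.card = H0.card := Finset.card_image_of_injOn (resInj false)
      have hc1 : H1'.card = H1.card := Finset.card_image_of_injOn (resInj true)
      -- boundary sum
      set e0 : ({j : ι // j ≠ i} → Bool) → (ι → Bool) :=
        fun w k => if h : k = i then false else w ⟨k, h⟩ with he0
      set e1 : ({j : ι // j ≠ i} → Bool) → (ι → Bool) :=
        fun w k => if h : k = i then true else w ⟨k, h⟩ with he1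
      have hA0 : ∀ w ∈ bdry H0', e0 w ∈ bdry H := by
        intro w hw
        have hw' : w ∈ bdry ((H.filter (fun v => v i = false)).image
            (fun v (j : {j : ι // j ≠ i}) => v j.val)) := hw
        exact ext_bdry i H false w hw'
      have hA1 : ∀ w ∈ bdry H1', e1 w ∈ bdry H := by
        intro w hw
        have hw' : w ∈ bdry ((H.filter (fun v => v i = true)).image
            (fun v (j : {j : ι // j ≠ i}) => v j.val)) := hw
        exact ext_bdry i H true w hw'
      have hinj0 : Set.InjOn e0 (bdry H0') := by
        intro u _ w _ huw
        funext j
        obtain ⟨jv, hjv⟩ := j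
        have h1 := congrFun huw jv
        simp only [he0] at h1
        simpa [dif_neg hjv] using h1
      have hinj1 : Set.InjOn e1 (bdry H1') := by
        intro u _ w _ huw
        funext j
        obtain ⟨jv, hjv⟩ := j
        have h1 := congrFun huw jv
        simp only [he1] at h1
        simpa [dif_neg hjv] using h1
      have hdisj : Disjoint ((bdry H0').image e0) ((bdry H1').image e1) := by
        rw [Finset.disjoint_left]
        intro v hv0 hv1
        obtain ⟨w0, _, rfl⟩ := Finset.mem_image.1 hv0
        obtain ⟨w1, _, heq⟩ := Finset.mem_image.1 hv1
        have := congrFun heq i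
        simp [he0, he1] at this
      have hBsum : (bdry H0').card + (bdry H1').card ≤ (bdry H).card := by
        calc (bdry H0').card + (bdry H1').card
            = ((bdry H0').image e0).card + ((bdry H1').image e1).card := by
              rw [Finset.card_image_of_injOn hinj0, Finset.card_image_of_injOn hinj1]
          _ = (((bdry H0').image e0) ∪ ((bdry H1').image e1)).card :=
              (Finset.card_union_of_disjoint hdisj).symm
          _ ≤ (bdry H).card := by
              apply Finset.card_le_card
              intro v hv
              rcases Finset.mem_union.1 hv with h | h
              · obtain ⟨w, hw, rfl⟩ := Finset.mem_image.1 h; exact hA0 w hw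
              · obtain ⟨w, hw, rfl⟩ := Finset.mem_image.1 h; exact hA1 w hw
      -- apply IH
      have hALe : H0.card ≤ n := by omega
      have hBLe : H1.card ≤ n := by omega
      have IH0 := IH (n-1) (by omega) {j : ι // j ≠ i} inferInstance inferInstance H0'
        hcard' (by omega) (by omega)
      have IH1 := IH (n-1) (by omega) {j : ι // j ≠ i} inferInstance inferInstance H1'
        hcard' (by omega) (by omega)
      rw [hc0] at IH0
      rw [hc1] at IH1
      -- arithmetic
      set a := H0.card
      set b := H1.card
      set B0 := (bdry H0').card
      set B1 := (bdry H1').card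
      set B := (bdry H).card
      set m := H.card
      have key : 2*a*(n-1) + 2*b*(n-1) + 2*m ≤ (m+2)*(m-1) + 2*B0 + 2*B1 + 2*m → True := fun _ => trivial
      zify [ha, hb, h1, hn1] at IH0 IH1 ⊢
      have hab : (a : ℤ) + b = m := by exact_mod_cast hsplit
      nlinarith [mul_nonneg (by linarith : (0:ℤ) ≤ (a:ℤ) - 1) (by linarith : (0:ℤ) ≤ (b:ℤ) - 1),
        hBsum, hab]

lemma two_mul_choose_two' (t : ℕ) : 2 * t.choose 2 + t = t * t := by
  induction t with
  | zero => rfl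
  | succ t ih =>
    rw [Nat.choose_succ_succ, Nat.choose_one_right]
    nlinarith [ih]

lemma two_mul_choose_two (t : ℕ) : 2 * t.choose 2 = t * (t - 1) := by
  induction t with
  | zero => rfl
  | succ t ih =>
    rw [Nat.choose_succ_succ, Nat.mul_add, ih, Nat.choose_one_right]
    cases t with
    | zero => rfl
    | succ s =>
      simp only [Nat.succ_sub_one]
      ring

section Upper
variable {n : ℕ}

def sing (a : ℕ) : Fin n → Bool := fun k => decide ((k : ℕ) = a)

def dbl (s : Finset ℕ) : Fin n → Bool := fun k => decide ((k : ℕ) ∈ s)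

lemma sing_injOn {K : ℕ} (hK : K ≤ n) :
    Set.InjOn (sing (n := n)) (Finset.range n) := by
  intro a ha b hb hab
  simp only [Finset.coe_range, Set.mem_Iio] at ha hb
  simpa [sing] using congrFun hab ⟨a, ha⟩

lemma upper_exists (m : ℕ) (h1 : 2 ≤ m) (h2 : m ≤ n + 1) :
    ∃ H : Finset (Fin n → Bool), H.card = m ∧
      (bdry H).card ≤ (n - (m - 1)) + (n.choose 2 - (n - (m-1)).choose 2) := by
  set K := m - 1 with hKdef
  have hK1 : 1 ≤ K := by omega
  have hKn : K ≤ n := by omega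
  set z : Fin n → Bool := fun _ => false with hz
  set H : Finset (Fin n → Bool) := insert z ((Finset.range K).image (sing (n := n))) with hH
  have hzni : z ∉ (Finset.range K).image (sing (n := n)) := by
    rw [Finset.mem_image]
    rintro ⟨a, ha, hEq⟩
    rw [Finset.mem_range] at ha
    have := congrFun hEq ⟨a, lt_of_lt_of_le ha hKn⟩
    simp [sing, hz] at this
  have hcard : H.card = m := by
    rw [hH, Finset.card_insert_of_notMem hzni,
      Finset.card_image_of_injOn (Set.InjOn.mono ?_ (sing_injOn hKn)), Finset.card_range]
    · omega
    · intro a ha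
      simp only [Finset.coe_range, Set.mem_Iio, Finset.mem_coe, Finset.mem_range] at *
      omega
  refine ⟨H, hcard, ?_⟩
  set Ssing : Finset (Fin n → Bool) := (Finset.Ico K n).image (sing (n := n)) with hSsing
  set Pairs : Finset (Fin n → Bool) :=
    (((Finset.range n).powersetCard 2) \ ((Finset.Ico K n).powersetCard 2)).image
      (dbl (n := n)) with hPairs
  have hsub : bdry H ⊆ Ssing ∪ Pairs := by
    intro v hv
    simp only [bdry, Finset.mem_filter, Finset.mem_univ, true_and] at hv
    obtain ⟨hvH, u, huH, hdist⟩ := hv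
    obtain ⟨j, hj, hother⟩ := exists_single_coord hdist
    rw [hH, Finset.mem_insert] at huH
    rcases huH with rfl | huI
    · -- u = z : v is a single
      have hvj : v j = true := by
        revert hj
        rw [hz]
        cases v j <;> simp
      have hvs : v = sing (n := n) (j : ℕ) := by
        funext k
        by_cases hk : k = j
        · subst hk
          simp [sing, hvj]
        · rw [← hother k hk, hz]
          have : ¬ ((k : ℕ) = (j : ℕ)) := fun hEq => hk (Fin.ext hEq)
          simp [sing, this]
      by_cases hjK : (j : ℕ) < K
      · exfalso
        apply hvH
        rw [hH]
        apply Finset.mem_insert_of_mem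
        rw [hvs]
        exact Finset.mem_image_of_mem _ (Finset.mem_range.2 hjK)
      · apply Finset.mem_union_left
        rw [hSsing, hvs]
        exact Finset.mem_image_of_mem _ (Finset.mem_Ico.2 ⟨le_of_not_gt hjK, j.isLt⟩)
    · -- u = sing a
      obtain ⟨a, haK, rfl⟩ := Finset.mem_image.1 huI
      rw [Finset.mem_range] at haK
      by_cases hja : (j : ℕ) = a
      · -- v = z, contradiction
        exfalso
        apply hvH
        have hvz : v = z := by
          funext k
          by_cases hk : k = j
          · subst hk
            have huj : sing (n := n) a k = true := by simp [sing, hja]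
            rw [hz]
            revert hj
            rw [huj]
            cases v k <;> simp
          · rw [← hother k hk, hz]
            have : ¬ ((k : ℕ) = a) := by
              intro hEq
              exact hk (Fin.ext (hEq.trans hja.symm))
            simp [sing, this]
        rw [hH, hvz]
        exact Finset.mem_insert_self _ _
      · -- v is a double
        have huj : sing (n := n) a j = false := by simp [sing, hja]
        have hvj : v j = true := by
          revert hj
          rw [huj]
          cases v j <;> simp
        have hvd : v = dbl (n := n) (insert a {(j : ℕ)}) := by
          funext k
          by_cases hk : k = j
          · subst hk
            simp [dbl, hvj]
          · rw [← hother k hk]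
            have hkj : ¬ ((k : ℕ) = (j : ℕ)) := fun hEq => hk (Fin.ext hEq)
            simp only [sing, dbl, Finset.mem_insert, Finset.mem_singleton]
            rw [decide_eq_decide]
            constructor
            · intro hEq; exact Or.inl hEq
            · rintro (hEq | hEq)
              · exact hEq
              · exact absurd hEq hkj
        apply Finset.mem_union_right
        rw [hPairs, hvd]
        apply Finset.mem_image_of_mem
        rw [Finset.mem_sdiff]
        constructor
        · rw [Finset.mem_powersetCard]
          constructor
          · intro t ht
            simp only [Finset.mem_insert, Finset.mem_singleton] at ht
            rw [Finset.mem_range]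
            rcases ht with rfl | rfl
            · omega
            · exact j.isLt
          · rw [Finset.card_insert_of_notMem (by
                simp only [Finset.mem_singleton]
                intro hEq
                exact hja hEq.symm), Finset.card_singleton]
        · rw [Finset.mem_powersetCard]
          rintro ⟨hsub', -⟩
          have := hsub' (Finset.mem_insert_self _ _)
          rw [Finset.mem_Ico] at this
          omega
  calc (bdry H).card ≤ (Ssing ∪ Pairs).card := Finset.card_le_card hsub
    _ ≤ Ssing.card + Pairs.card := Finset.card_union_le _ _
    _ ≤ (n - K) + (n.choose 2 - (n - K).choose 2) := by
        apply Nat.add_le_add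
        · calc Ssing.card ≤ (Finset.Ico K n).card := Finset.card_image_le
            _ = n - K := Nat.card_Ico K n
        · calc Pairs.card
              ≤ (((Finset.range n).powersetCard 2) \ ((Finset.Ico K n).powersetCard 2)).card :=
                Finset.card_image_le
            _ = n.choose 2 - (n - K).choose 2 := by
                rw [Finset.card_sdiff_of_subset (Finset.powersetCard_mono (by
                  intro t ht
                  rw [Finset.mem_Ico] at ht
                  exact Finset.mem_range.2 ht.2))]
                rw [Finset.card_powersetCard, Finset.card_powersetCard,
                  Finset.card_range, Nat.card_Ico]
end Upper


/-- The `n`-dimensional hypercube: vertices are binary strings of length `n`,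
adjacent iff they differ in exactly one coordinate. -/
def Qube (n : ℕ) : SimpleGraph (Fin n → Bool) where
  Adj u v := hammingDist u v = 1
  symm := ⟨fun u v h => by show hammingDist v u = 1; rwa [hammingDist_comm]⟩
  loopless := ⟨fun u h => by simp only [hammingDist_self] at h; exact absurd h (by norm_num)⟩

instance (n : ℕ) : DecidableRel (Qube n).Adj :=
  fun u v => inferInstanceAs (Decidable (hammingDist u v = 1))

/-- The vertex boundary of a vertex set `H` in `Qube n`. -/
def vBoundary (n : ℕ) (H : Finset (Fin n → Bool)) : Finset (Fin n → Bool) :=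
  Finset.univ.filter (fun v => v ∉ H ∧ ∃ u ∈ H, (Qube n).Adj u v)

/-- The minimum `m`-vertex boundary number of `Qube n`. -/
noncomputable def bv (n m : ℕ) : ℕ :=
  sInf { k | ∃ H : Finset (Fin n → Bool), H.card = m ∧ (vBoundary n H).card = k }

/-- The hypercube with a vertex set `S` deleted. -/
def QDel (n : ℕ) (S : Finset (Fin n → Bool)) :
    SimpleGraph ((↑(Sᶜ) : Set (Fin n → Bool))) :=
  (Qube n).induce (↑(Sᶜ) : Set (Fin n → Bool))

/-- The `k`-extra connectivity of `Qube n`: the minimum size of a vertex set `T`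
such that `Qube n − T` is disconnected and every component has at least `k+1` vertices. -/
noncomputable def extraConn (n k : ℕ) : ℕ :=
  sInf { t | ∃ T : Finset (Fin n → Bool), T.card = t ∧
    ¬ (QDel n T).Connected ∧
    ∀ c : (QDel n T).ConnectedComponent,
      k + 1 ≤ {v | (QDel n T).connectedComponentMk v = c}.ncard }

lemma vBoundary_eq_bdry (n : ℕ) (H : Finset (Fin n → Bool)) :
    vBoundary n H = bdry H := by
  ext v
  simp only [vBoundary, bdry, Finset.mem_filter, Finset.mem_univ, true_and]
  rfl

theorem stmt6 (n m : ℕ) (h1 : 2 ≤ m) (h2 : m ≤ n + 1) :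
    2 * (bv n m : ℤ) = -(m : ℤ)^2 + (2 * n - 1) * m + 2 := by
  set S : Set ℕ :=
    { k | ∃ H : Finset (Fin n → Bool), H.card = m ∧ (vBoundary n H).card = k } with hS
  obtain ⟨H0, hH0card, hH0le⟩ := upper_exists (n := n) m h1 h2
  have hk0 : (vBoundary n H0).card ∈ S := ⟨H0, hH0card, rfl⟩
  have hne : S.Nonempty := ⟨_, hk0⟩
  have hbv_mem : bv n m ∈ S := Nat.sInf_mem hne
  have hbv_le : bv n m ≤ (vBoundary n H0).card := Nat.sInf_le hk0
  -- lower bound at the infimum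
  obtain ⟨H1, hH1card, hH1eq⟩ := hbv_mem
  have hlow := lower_bound n (Fin n) inferInstance inferInstance H1
    (Fintype.card_fin n) (by omega) (by omega)
  rw [vBoundary_eq_bdry] at hH1eq
  rw [hH1card, hH1eq] at hlow
  -- upper bound numeric estimate
  rw [vBoundary_eq_bdry] at hbv_le
  have hq : (n - (m - 1)).choose 2 ≤ n.choose 2 := Nat.choose_le_choose 2 (Nat.sub_le n (m-1))
  have e1 := two_mul_choose_two' n
  have e2 := two_mul_choose_two' (n - (m - 1))
  have hKn : m - 1 ≤ n := by omega
  -- combine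
  have hup : (m + 2) * (m - 1) + 2 * (bv n m) ≤ 2 * m * n := by
    have hb2 : bv n m ≤ (n - (m - 1)) + (n.choose 2 - (n - (m-1)).choose 2) :=
      le_trans hbv_le hH0le
    have hq1 : ((n - (m - 1) : ℕ) : ℤ) = (n : ℤ) - (m : ℤ) + 1 := by
      have : ((n - (m - 1) : ℕ) : ℤ) = (n : ℤ) - ((m : ℤ) - 1) := by
        zify [hKn, (by omega : 1 ≤ m)]
      rw [this]; ring
    zify [hq, hKn, (by omega : 1 ≤ m), (by omega : 1 ≤ n)] at hb2 e1 e2 ⊢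
    nlinarith [hb2, e1, e2]
  zify [(by omega : 1 ≤ m)] at hlow hup
  nlinarith [hlow, hup]
end

section
/- For the n-dimensional hypercube Q_n and any integer m with n+2 ≤ m ≤ 2n−1, the minimum m-vertex boundary number satisfies b_v(m; Q_n) = −m²/2 + (2n − 3/2)m − n² + 2. -/
namespace HyperAux
open Finset

abbrev V (n : ℕ) := Fin n → Bool

lemma mem_vB {n : ℕ} {H : Finset (V n)} {v : V n} :
    v ∈ vBoundary n H ↔ v ∉ H ∧ ∃ u ∈ H, hammingDist u v = 1 := by
  rw [vBoundary, Finset.mem_filter]; simp [Qube]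

/-- tail along coordinate i -/
def tl {n : ℕ} (i : Fin (n+1)) (v : V (n+1)) : V n := fun j => v (i.succAbove j)

/-- insert value b at coordinate i -/
def ins {n : ℕ} (i : Fin (n+1)) (b : Bool) (u : V n) : V (n+1) := i.insertNth b u

lemma tl_ins {n : ℕ} (i : Fin (n+1)) (b : Bool) (u : V n) : tl i (ins i b u) = u := by
  funext j; exact Fin.insertNth_apply_succAbove (α := fun _ => Bool) i b u j

lemma ins_same {n : ℕ} (i : Fin (n+1)) (b : Bool) (u : V n) : ins i b u i = b :=
  Fin.insertNth_apply_same (α := fun _ => Bool) i b u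

lemma ins_tl {n : ℕ} (i : Fin (n+1)) (v : V (n+1)) : ins i (v i) (tl i v) = v := by
  funext j
  by_cases h : j = i
  · rw [h]; exact ins_same i (v i) (tl i v)
  · obtain ⟨k, hk⟩ := Fin.exists_succAbove_eq h
    rw [← hk]; exact Fin.insertNth_apply_succAbove (α := fun _ => Bool) i (v i) (tl i v) k

lemma hd_split {n : ℕ} (i : Fin (n+1)) (v w : V (n+1)) :
    hammingDist v w = (if v i = w i then 0 else 1) + hammingDist (tl i v) (tl i w) := by
  have h1 : hammingDist v w = ∑ j, if v j ≠ w j then 1 else 0 := Finset.card_filter _ _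
  have h2 : hammingDist (tl i v) (tl i w)
      = ∑ j, if v (i.succAbove j) ≠ w (i.succAbove j) then 1 else 0 := Finset.card_filter _ _
  rw [h1, Fin.sum_univ_succAbove _ i, h2]
  by_cases h : v i = w i <;> simp [h]

def slice {n : ℕ} (i : Fin (n+1)) (b : Bool) (H : Finset (V (n+1))) : Finset (V n) :=
  (H.filter (fun v => v i = b)).image (tl i)

lemma mem_slice {n : ℕ} {i : Fin (n+1)} {b : Bool} {H : Finset (V (n+1))} {u : V n} :
    u ∈ slice i b H ↔ ins i b u ∈ H := by
  constructor
  · intro hm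
    obtain ⟨v, hv, rfl⟩ := Finset.mem_image.1 hm
    obtain ⟨hvH, hvi⟩ := Finset.mem_filter.1 hv
    have : ins i b (tl i v) = v := by rw [← hvi]; exact ins_tl i v
    rwa [this]
  · intro h
    exact Finset.mem_image.2 ⟨ins i b u, Finset.mem_filter.2 ⟨h, ins_same i b u⟩, tl_ins i b u⟩

lemma card_slice {n : ℕ} (i : Fin (n+1)) (H : Finset (V (n+1))) :
    (slice i false H).card + (slice i true H).card = H.card := by
  have inj : ∀ b : Bool, Set.InjOn (tl i) (H.filter (fun v => v i = b)) := by
    intro b v hv w hw htl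
    simp only [Finset.coe_filter, Set.mem_setOf_eq] at hv hw
    calc v = ins i (v i) (tl i v) := (ins_tl i v).symm
    _ = ins i (w i) (tl i w) := by rw [hv.2, hw.2, htl]
    _ = w := ins_tl i w
  rw [slice, slice, Finset.card_image_of_injOn (inj false), Finset.card_image_of_injOn (inj true)]
  have e : H.filter (fun v => v i = true) = H.filter (fun v => ¬ v i = false) := by
    apply Finset.filter_congr; intro v _; simp
  rw [e]
  exact Finset.card_filter_add_card_filter_not _

/-- slice of the boundary, exactly. -/
lemma slice_vB {n : ℕ} (i : Fin (n+1)) (b : Bool) (H : Finset (V (n+1))) :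
    slice i b (vBoundary (n+1) H) =
      vBoundary n (slice i b H) ∪ (slice i (!b) H \ slice i b H) := by
  ext u
  simp only [Finset.mem_union, Finset.mem_sdiff, mem_slice, mem_vB]
  constructor
  · rintro ⟨hnH, x, hxH, hdx⟩
    rw [hd_split i x (ins i b u), tl_ins] at hdx
    by_cases hxi : x i = b
    · rw [ins_same, if_pos hxi] at hdx
      have hxe : ins i b (tl i x) = x := by rw [← hxi]; exact ins_tl i x
      exact Or.inl ⟨hnH, tl i x, by rwa [hxe], by simpa using hdx⟩
    · rw [ins_same, if_neg hxi] at hdx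
      have h0 : hammingDist (tl i x) u = 0 := by omega
      have hux : tl i x = u := hammingDist_eq_zero.1 h0
      have hxb : x i = !b := by cases b <;> cases hxi2 : x i <;> simp_all
      have hxe : ins i (!b) u = x := by rw [← hux, ← hxb]; exact ins_tl i x
      exact Or.inr ⟨by rwa [hxe], hnH⟩
  · rintro (⟨hns, y, hy, hdy⟩ | ⟨hyb, hnb⟩)
    · refine ⟨hns, ins i b y, hy, ?_⟩
      rw [hd_split i, ins_same, ins_same, if_pos rfl, tl_ins, tl_ins]
      simpa using hdy
    · refine ⟨hnb, ins i (!b) u, hyb, ?_⟩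
      rw [hd_split i, ins_same, ins_same, tl_ins, tl_ins]
      cases b <;> simp

lemma card_vB_split {n : ℕ} (i : Fin (n+1)) (H : Finset (V (n+1))) :
    (vBoundary (n+1) H).card
      = (slice i false (vBoundary (n+1) H)).card + (slice i true (vBoundary (n+1) H)).card :=
  (card_slice i _).symm

/-- monotonicity trick : removing vertices decreases the boundary by at most the removed count -/
lemma vB_sub_trick {n : ℕ} {H' H : Finset (V n)} (hsub : H' ⊆ H) :
    (vBoundary n H').card ≤ (vBoundary n H).card + (H.card - H'.card) := by
  have hsubB : vBoundary n H' ⊆ vBoundary n H ∪ (H \ H') := by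
    intro v hv
    rw [mem_vB] at hv
    obtain ⟨hvn, u, hu, hd⟩ := hv
    by_cases hvH : v ∈ H
    · exact Finset.mem_union_right _ (Finset.mem_sdiff.2 ⟨hvH, hvn⟩)
    · exact Finset.mem_union_left _ (mem_vB.2 ⟨hvH, u, hsub hu, hd⟩)
  calc (vBoundary n H').card ≤ (vBoundary n H ∪ (H \ H')).card := Finset.card_le_card hsubB
    _ ≤ (vBoundary n H).card + (H \ H').card := Finset.card_union_le _ _
    _ = (vBoundary n H).card + (H.card - H'.card) := by rw [Finset.card_sdiff_of_subset hsub]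

/-- the Harper bound function (twice the minimum boundary) -/
def G (n s : ℕ) : ℤ :=
  if s ≤ n+1 then -(s:ℤ)^2 + (2*(n:ℤ)-1)*s + 2
  else -(s:ℤ)^2 + (4*(n:ℤ)-3)*s - 2*(n:ℤ)^2 + 4

/-! arithmetic lemmas about G -/

lemma G1 {n s : ℕ} (h : s ≤ n+1) : G n s = -(s:ℤ)^2 + (2*(n:ℤ)-1)*s + 2 := if_pos h

lemma G2 {n s : ℕ} (h : n+1 ≤ s) : G n s = -(s:ℤ)^2 + (4*(n:ℤ)-3)*s - 2*(n:ℤ)^2 + 4 := by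
  by_cases hs : s ≤ n+1
  · have he : s = n+1 := le_antisymm hs h
    subst he
    rw [G, if_pos (le_refl _)]
    push_cast; ring
  · exact if_neg hs

lemma A1 (d s : ℕ) (h1 : 1 ≤ s) (h2 : s ≤ 2*d+1) : G (d+1) s ≤ G d s + 2*s := by
  by_cases hs : s ≤ d+1
  · rw [G1 (by omega), G1 hs]
    push_cast; ring_nf; linarith
  · have hs2 : d+1 ≤ s := by omega
    have h2' : (s:ℤ) ≤ 2*(d:ℤ)+1 := by exact_mod_cast h2
    rw [G2 (by omega), G2 hs2]
    push_cast; nlinarith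

lemma A2 (d s : ℕ) (h2 : 2*d+2 ≤ s) (h3 : s ≤ 2*d+3) :
    G (d+1) s ≤ G d (2*d+1) + 4*(d:ℤ) + 2 := by
  rw [G2 (by omega : (d+1)+1 ≤ s), G2 (by omega : d+1 ≤ 2*d+1)]
  have h2' : 2*(d:ℤ)+2 ≤ s := by exact_mod_cast h2
  push_cast
  nlinarith [mul_nonneg (by linarith : (0:ℤ) ≤ (s:ℤ)-2*d) (by linarith : (0:ℤ) ≤ (s:ℤ)-2*d-1)]

lemma KEY12 (d a b : ℕ) (ha : 1 ≤ a) (hb : 1 ≤ b) (hba : b ≤ a) (ha2 : a ≤ 2*d+1)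
    (hs : a + b ≤ 2*d+3) (hcase : 2 ≤ b ∨ a + b ≤ d + 2) :
    G (d+1) (a+b) ≤ G d a + G d b := by
  have ha' : (1:ℤ) ≤ a := by exact_mod_cast ha
  have hb' : (1:ℤ) ≤ b := by exact_mod_cast hb
  have hbd : b ≤ d+1 := by omega
  have hbd' : (b:ℤ) ≤ (d:ℤ)+1 := by exact_mod_cast hbd
  by_cases hsd : a+b ≤ d+2
  · have had : a ≤ d+1 := by omega
    rw [G1 (by omega : a+b ≤ (d+1)+1), G1 had, G1 hbd]
    push_cast
    nlinarith [mul_nonneg (by linarith : (0:ℤ) ≤ (a:ℤ)-1) (by linarith : (0:ℤ) ≤ (b:ℤ)-1)]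
  · have hsd2 : (d:ℤ)+3 ≤ (a:ℤ)+(b:ℤ) := by exact_mod_cast (by omega : d+3 ≤ a+b)
    by_cases had : a ≤ d+1
    · have had' : (a:ℤ) ≤ (d:ℤ)+1 := by exact_mod_cast had
      rw [G2 (by omega : (d+1)+1 ≤ a+b), G1 had, G1 hbd]
      push_cast
      nlinarith [mul_nonneg (by linarith : (0:ℤ) ≤ (d:ℤ)+1-(a:ℤ)) (by linarith : (0:ℤ) ≤ (d:ℤ)+1-(b:ℤ))]
    · have hb2 : 2 ≤ b := by rcases hcase with h | h; exact h; omega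
      have hb2' : (2:ℤ) ≤ b := by exact_mod_cast hb2
      have had' : (d:ℤ)+2 ≤ a := by exact_mod_cast (by omega : d+2 ≤ a)
      rw [G2 (by omega : (d+1)+1 ≤ a+b), G2 (by omega : d+1 ≤ a), G1 hbd]
      push_cast
      nlinarith [mul_nonneg (by linarith : (0:ℤ) ≤ (a:ℤ)-(d:ℤ)-1) (by linarith : (0:ℤ) ≤ (b:ℤ)-2)]

lemma KEY3 (d a : ℕ) (ha : d+2 ≤ a) (ha2 : a ≤ 2*d+1) :
    G (d+1) (a+1) ≤ G d a + 2*(a:ℤ) - 2 := by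
  rw [G2 (by omega : (d+1)+1 ≤ a+1), G2 (by omega : d+1 ≤ a)]
  push_cast; nlinarith

lemma KEY3' (d : ℕ) : G (d+1) (2*d+3) ≤ G d (2*d+1) - 2 + 2*(2*(d:ℤ)+1) := by
  rw [G2 (by omega : (d+1)+1 ≤ 2*d+3), G2 (by omega : d+1 ≤ 2*d+1)]
  push_cast; nlinarith

lemma Gd (n s : ℕ) (hs : n+1 ≤ s) : G (n+1) (s+1) = G n s + 2*(s:ℤ) - 2 := by
  rw [G2 (by omega : (n+1)+1 ≤ s+1), G2 hs]
  push_cast; ring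

lemma Gl (n s : ℕ) (hs : n+1 ≤ s) : G (n+1) (s+2) = G n s + 4*(n:ℤ) - 4 := by
  rw [G2 (by omega : (n+1)+1 ≤ s+2), G2 hs]
  push_cast; ring

/-! ## The lower bound -/

theorem lower : ∀ n s : ℕ, ∀ H : Finset (V n), H.card = s → 1 ≤ s → s ≤ 2*n+1 →
    G n s ≤ 2 * ((vBoundary n H).card : ℤ) := by
  intro n
  induction n with
  | zero =>
    intro s H hcard hs1 hs2
    have hle : H.card ≤ 1 := by simpa using Finset.card_le_univ H
    have hs : s = 1 := by omega
    subst hs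
    have hG : G 0 1 = 0 := by norm_num [G]
    rw [hG]
    positivity
  | succ d IH =>
    intro s H hcard hs1 hs2
    by_cases hdeg : ∃ i : Fin (d+1), ∃ b : Bool, ∀ v ∈ H, v i = b
    · obtain ⟨i, b, hb⟩ := hdeg
      have hemp : slice i (!b) H = ∅ := by
        rw [Finset.eq_empty_iff_forall_notMem]
        intro u hu
        rw [mem_slice] at hu
        have h1 := hb _ hu
        rw [ins_same] at h1
        simp at h1
      have hcs := card_slice i H
      have hcard' : (slice i b H).card = s := by
        cases b
        · rw [show slice i true H = ∅ from by simpa using hemp] at hcs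
          simp only [Finset.card_empty] at hcs; omega
        · rw [show slice i false H = ∅ from by simpa using hemp] at hcs
          simp only [Finset.card_empty] at hcs; omega
      have h1 : vBoundary d (slice i b H) ⊆ slice i b (vBoundary (d+1) H) := by
        rw [slice_vB]; exact Finset.subset_union_left
      have h2 : slice i b H ⊆ slice i (!b) (vBoundary (d+1) H) := by
        rw [slice_vB]
        intro u hu
        refine Finset.mem_union_right _ (Finset.mem_sdiff.2 ⟨?_, ?_⟩)
        · rwa [Bool.not_not]
        · rw [hemp]; exact Finset.notMem_empty u
      have hb1 := Finset.card_le_card h1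
      have hb2 := Finset.card_le_card h2
      have hsum2 : (slice i b (vBoundary (d+1) H)).card
          + (slice i (!b) (vBoundary (d+1) H)).card = (vBoundary (d+1) H).card := by
        have hcsN := card_slice i (vBoundary (d+1) H)
        cases b
        · simp only [Bool.not_false]; omega
        · simp only [Bool.not_true]; omega
      have e1 : ((vBoundary d (slice i b H)).card : ℤ) + s ≤ ((vBoundary (d+1) H).card : ℤ) := by
        exact_mod_cast (by omega :
          (vBoundary d (slice i b H)).card + s ≤ (vBoundary (d+1) H).card)
      by_cases hrange : s ≤ 2*d+1
      · have hIH := IH s (slice i b H) hcard' hs1 hrange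
        have hA1 := A1 d s hs1 hrange
        linarith
      · obtain ⟨H'', hsub'', hcard''⟩ := Finset.exists_subset_card_eq (s := slice i b H) (n := 2*d+1) (by omega)
        have htrick := vB_sub_trick hsub''
        rw [hcard', hcard''] at htrick
        have hIH := IH (2*d+1) H'' hcard'' (by omega) (le_refl _)
        have hA2 := A2 d s (by omega) hs2
        have c1 : ((vBoundary d H'').card : ℤ)
            ≤ ((vBoundary d (slice i b H)).card : ℤ) + ((s:ℤ) - (2*(d:ℤ)+1)) := by
          omega
        linarith
    · push_neg at hdeg
      have hne : ∀ cc : Bool, 1 ≤ (slice (0 : Fin (d+1)) cc H).card := by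
        intro cc
        obtain ⟨v, hv, hvc⟩ := hdeg 0 (!cc)
        have hvc' : v 0 = cc := by cases cc <;> simp_all
        have hm : tl 0 v ∈ slice (0 : Fin (d+1)) cc H :=
          Finset.mem_image.2 ⟨v, Finset.mem_filter.2 ⟨hv, hvc'⟩, rfl⟩
        exact Nat.one_le_iff_ne_zero.2 (Finset.card_ne_zero_of_mem hm)
      obtain ⟨c, hcc⟩ : ∃ c : Bool,
          (slice (0:Fin (d+1)) (!c) H).card ≤ (slice (0:Fin (d+1)) c H).card := by
        rcases le_total ((slice (0:Fin (d+1)) false H).card) ((slice (0:Fin (d+1)) true H).card)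
          with h | h
        · exact ⟨true, by simpa using h⟩
        · exact ⟨false, by simpa using h⟩
      have hcs := card_slice (0 : Fin (d+1)) H
      have hsum : (slice (0:Fin (d+1)) c H).card + (slice (0:Fin (d+1)) (!c) H).card = s := by
        cases c
        · simp only [Bool.not_false]; omega
        · simp only [Bool.not_true]; omega
      have h1 : vBoundary d (slice (0:Fin (d+1)) c H) ⊆ slice (0:Fin (d+1)) c (vBoundary (d+1) H) := by
        rw [slice_vB]; exact Finset.subset_union_left
      have h2a : vBoundary d (slice (0:Fin (d+1)) (!c) H)
          ⊆ slice (0:Fin (d+1)) (!c) (vBoundary (d+1) H) := by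
        rw [slice_vB]; exact Finset.subset_union_left
      have h2b : slice (0:Fin (d+1)) c H \ slice (0:Fin (d+1)) (!c) H
          ⊆ slice (0:Fin (d+1)) (!c) (vBoundary (d+1) H) := by
        rw [slice_vB]
        intro u hu
        apply Finset.mem_union_right
        rwa [Bool.not_not]
      have hsum2 : (slice (0:Fin (d+1)) c (vBoundary (d+1) H)).card
          + (slice (0:Fin (d+1)) (!c) (vBoundary (d+1) H)).card = (vBoundary (d+1) H).card := by
        have hcsN := card_slice (0 : Fin (d+1)) (vBoundary (d+1) H)
        cases c
        · simp only [Bool.not_false]; omega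
        · simp only [Bool.not_true]; omega
      have ha1 := hne c
      have hb1' := hne (!c)
      by_cases hcase : 2 ≤ (slice (0:Fin (d+1)) (!c) H).card ∨ s ≤ d+2
      · have haR : (slice (0:Fin (d+1)) c H).card ≤ 2*d+1 := by
          rcases hcase with h | h <;> omega
        have hIHA := IH _ (slice (0:Fin (d+1)) c H) rfl ha1 haR
        have hIHB := IH _ (slice (0:Fin (d+1)) (!c) H) rfl hb1' (le_trans hcc haR)
        have hKEY := KEY12 d _ _ ha1 hb1' hcc haR (by omega)
          (by rcases hcase with h | h
              · exact Or.inl h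
              · exact Or.inr (by omega))
        have t1 := Finset.card_le_card h1
        have t2 := Finset.card_le_card h2a
        have e1 : ((vBoundary d (slice (0:Fin (d+1)) c H)).card : ℤ)
            + ((vBoundary d (slice (0:Fin (d+1)) (!c) H)).card : ℤ)
            ≤ ((vBoundary (d+1) H).card : ℤ) := by
          exact_mod_cast (by omega : (vBoundary d (slice (0:Fin (d+1)) c H)).card
            + (vBoundary d (slice (0:Fin (d+1)) (!c) H)).card ≤ (vBoundary (d+1) H).card)
        rw [show s = (slice (0:Fin (d+1)) c H).card + (slice (0:Fin (d+1)) (!c) H).card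
          from hsum.symm]
        linarith
      · push_neg at hcase
        obtain ⟨hcase1, hcase2⟩ := hcase
        have hbeq : (slice (0:Fin (d+1)) (!c) H).card = 1 := by omega
        have hsd : d+3 ≤ s := by omega
        have haeq : (slice (0:Fin (d+1)) c H).card = s - 1 := by omega
        have t1 := Finset.card_le_card h1
        have t2 := Finset.card_le_card h2b
        have t3 := Finset.le_card_sdiff (slice (0:Fin (d+1)) (!c) H) (slice (0:Fin (d+1)) c H)
        have hAsub : (vBoundary d (slice (0:Fin (d+1)) c H)).card
            + ((slice (0:Fin (d+1)) c H).card - 1) ≤ (vBoundary (d+1) H).card := by omega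
        by_cases hr2 : s ≤ 2*d+2
        · have hIHA := IH _ (slice (0:Fin (d+1)) c H) rfl ha1 (by omega)
          have hKEY := KEY3 d ((slice (0:Fin (d+1)) c H).card) (by omega) (by omega)
          rw [show s = (slice (0:Fin (d+1)) c H).card + 1 from by omega]
          have e1 : ((vBoundary d (slice (0:Fin (d+1)) c H)).card : ℤ)
              + (((slice (0:Fin (d+1)) c H).card : ℤ) - 1) ≤ ((vBoundary (d+1) H).card : ℤ) := by
            omega
          linarith
        · have hseq : s = 2*d+3 := by omega
          obtain ⟨H'', hsub'', hcard''⟩ :=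
            Finset.exists_subset_card_eq (s := slice (0:Fin (d+1)) c H) (n := 2*d+1) (by omega)
          have htrick := vB_sub_trick hsub''
          rw [hcard''] at htrick
          have hIH2 := IH (2*d+1) H'' hcard'' (by omega) (le_refl _)
          have hKEY := KEY3' d
          rw [hseq]
          have e1 : ((vBoundary d (slice (0:Fin (d+1)) c H)).card : ℤ) + (2*(d:ℤ)+1)
              ≤ ((vBoundary (d+1) H).card : ℤ) := by omega
          have e2 : ((vBoundary d H'').card : ℤ)
              ≤ ((vBoundary d (slice (0:Fin (d+1)) c H)).card : ℤ) + 1 := by omega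
          linarith

/-! ## The upper bound -/

def sph {n : ℕ} (z : V n) : Finset (V n) := univ.filter (fun w => hammingDist z w = 1)

lemma mem_sph {n : ℕ} {z w : V n} : w ∈ sph z ↔ hammingDist z w = 1 := by simp [sph]

lemma card_sph {n : ℕ} (z : V n) : (sph z).card = n := by
  have hu : (Finset.univ : Finset (Fin n)).card = n := by simp
  have key : (Finset.univ : Finset (Fin n)).card = (sph z).card := by
    refine Finset.card_bij (fun j _ => Function.update z j (!z j)) ?_ ?_ ?_
    · intro j _
      rw [mem_sph]
      have hf : (Finset.univ.filter fun k => z k ≠ Function.update z j (!z j) k) = {j} := by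
        ext k
        by_cases hk : k = j
        · subst hk; simp
        · simp [hk, Function.update_of_ne hk]
      show (Finset.univ.filter _).card = 1
      rw [hf, Finset.card_singleton]
    · intro j _ j' _ hupd
      by_contra hne
      have h1 := congrFun hupd j
      rw [Function.update_self, Function.update_of_ne hne] at h1
      simp at h1
    · intro w hw
      rw [mem_sph] at hw
      have hw' : (Finset.univ.filter fun i => z i ≠ w i).card = 1 := hw
      obtain ⟨j, hj⟩ := Finset.card_eq_one.1 hw'
      refine ⟨j, Finset.mem_univ j, ?_⟩
      funext k
      by_cases hk : k = j
      · subst hk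
        have hkm : k ∈ Finset.univ.filter (fun i => z i ≠ w i) := by rw [hj]; simp
        have hkm' : z k ≠ w k := by simpa using hkm
        rw [Function.update_self]
        cases hz : z k <;> cases hwk : w k <;> simp_all
      · have hkm : k ∉ Finset.univ.filter (fun i => z i ≠ w i) := by rw [hj]; simp [hk]
        have hkm' : z k = w k := by simpa using hkm
        rw [Function.update_of_ne hk]
        exact hkm'
  omega

lemma parity3 {n : ℕ} (u v w : V n) :
    Even (hammingDist u v + hammingDist u w + hammingDist v w) := by
  have h1 : ∀ (x y : V n), hammingDist x y = ∑ j, if x j ≠ y j then 1 else 0 :=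
    fun x y => Finset.card_filter _ _
  rw [h1, h1, h1, ← Finset.sum_add_distrib, ← Finset.sum_add_distrib]
  apply Finset.even_sum
  intro j _
  cases hu : u j <;> cases hv : v j <;> cases hw : w j <;> simp [hu, hv, hw]

lemma sph_disj {n : ℕ} {z₀ z₁ : V n} (h : hammingDist z₀ z₁ = 1) :
    Disjoint (sph z₀) (sph z₁) := by
  rw [Finset.disjoint_left]
  intro x h0 h1
  rw [mem_sph] at h0 h1
  have := parity3 z₀ z₁ x
  rw [h, h0, h1] at this
  exact absurd this (by decide)

lemma vB_singleton {n : ℕ} (z : V n) : vBoundary n {z} = sph z := by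
  ext v
  rw [mem_vB, mem_sph]
  constructor
  · rintro ⟨hv, u, hu, hd⟩
    rw [Finset.mem_singleton] at hu; subst hu; exact hd
  · intro hd
    refine ⟨?_, z, Finset.mem_singleton_self z, hd⟩
    rw [Finset.mem_singleton]
    rintro rfl
    rw [hammingDist_self] at hd; omega

lemma vB_pair {n : ℕ} (z₀ z₁ : V n) :
    vBoundary n {z₀, z₁} = (sph z₀ ∪ sph z₁) \ {z₀, z₁} := by
  ext v
  rw [mem_vB, Finset.mem_sdiff, Finset.mem_union, mem_sph, mem_sph]
  simp only [Finset.mem_insert, Finset.mem_singleton]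
  constructor
  · rintro ⟨hv, u, hu, hd⟩
    rcases hu with rfl | rfl
    · exact ⟨Or.inl hd, hv⟩
    · exact ⟨Or.inr hd, hv⟩
  · rintro ⟨hor, hv⟩
    rcases hor with hd | hd
    · exact ⟨hv, z₀, Or.inl rfl, hd⟩
    · exact ⟨hv, z₁, Or.inr rfl, hd⟩

lemma ins_inj {n : ℕ} {i : Fin (n+1)} {b : Bool} {u v : V n} (h : ins i b u = ins i b v) :
    u = v := by
  have h2 := congrArg (tl i) h
  rwa [tl_ins, tl_ins] at h2

lemma ins_ne_bool {n : ℕ} {i : Fin (n+1)} {u v : V n} (h : ins i false u = ins i true v) :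
    False := by
  have h2 := congrArg (fun x => x i) h
  simp only [ins_same] at h2
  exact Bool.false_ne_true h2

lemma hd_ins {n : ℕ} (i : Fin (n+1)) (b c : Bool) (u v : V n) :
    hammingDist (ins i b u) (ins i c v) = (if b = c then 0 else 1) + hammingDist u v := by
  rw [hd_split i, ins_same, ins_same, tl_ins, tl_ins]

/-- invariant for the extremal construction -/
def Inv (n : ℕ) (H : Finset (V n)) (z₀ z₁ : V n) : Prop :=
  hammingDist z₀ z₁ = 1 ∧ (∀ w, hammingDist z₀ w ≤ 1 → w ∈ H) ∧
    (∀ w ∈ H, hammingDist z₀ w ≤ 1 ∨ hammingDist z₁ w = 1)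

lemma stepD {n : ℕ} {H : Finset (V n)} {z₀ z₁ : V n} (h : Inv n H z₀ z₁) :
    ∃ H' : Finset (V (n+1)), ∃ y₀ y₁ : V (n+1), Inv (n+1) H' y₀ y₁ ∧
      H'.card = H.card + 1 ∧
      (vBoundary (n+1) H').card + 1 = (vBoundary n H).card + H.card := by
  obtain ⟨hz01, hball, hcover⟩ := h
  have hz₀H : z₀ ∈ H := hball z₀ (by rw [hammingDist_self]; omega)
  have hz₁H : z₁ ∈ H := hball z₁ (le_of_eq hz01)
  classical
  set H' := H.image (ins (0 : Fin (n+1)) false) ∪ {ins 0 true z₀} with hH'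
  have hsf : slice (0 : Fin (n+1)) false H' = H := by
    ext u
    rw [mem_slice, hH']
    simp only [Finset.mem_union, Finset.mem_image, Finset.mem_singleton]
    constructor
    · rintro (⟨x, hx, hxe⟩ | he)
      · rwa [← ins_inj hxe]
      · exact absurd he (fun he => ins_ne_bool he)
    · intro hu; exact Or.inl ⟨u, hu, rfl⟩
  have hst : slice (0 : Fin (n+1)) true H' = {z₀} := by
    ext u
    rw [mem_slice, hH']
    simp only [Finset.mem_union, Finset.mem_image, Finset.mem_singleton]
    constructor
    · rintro (⟨x, hx, hxe⟩ | he)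
      · exact absurd hxe (fun he => ins_ne_bool he)
      · exact ins_inj he
    · rintro rfl; exact Or.inr rfl
  have hInv : Inv (n+1) H' (ins 0 false z₀) (ins 0 false z₁) := by
    refine ⟨?_, ?_, ?_⟩
    · rw [hd_ins]; simp [hz01]
    · intro w hw
      cases h0 : w 0
      · have hrep : ins (0 : Fin (n+1)) false (tl 0 w) = w := by rw [← h0]; exact ins_tl 0 w
        rw [← hrep, hd_ins] at hw
        simp only [if_pos rfl] at hw
        rw [hH', ← hrep]
        exact Finset.mem_union_left _ (Finset.mem_image.2 ⟨tl 0 w, hball _ (by omega), rfl⟩)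
      · have hrep : ins (0 : Fin (n+1)) true (tl 0 w) = w := by rw [← h0]; exact ins_tl 0 w
        rw [← hrep, hd_ins] at hw
        simp only [Bool.false_eq_true, if_false] at hw
        have hd0 : hammingDist z₀ (tl 0 w) = 0 := by omega
        have htlz : z₀ = tl 0 w := hammingDist_eq_zero.1 hd0
        rw [hH', ← hrep, ← htlz]
        exact Finset.mem_union_right _ (Finset.mem_singleton_self _)
    · intro w hw
      rw [hH'] at hw
      rcases Finset.mem_union.1 hw with hw | hw
      · obtain ⟨u, hu, rfl⟩ := Finset.mem_image.1 hw
        rcases hcover u hu with hc | hc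
        · left; rw [hd_ins]; simpa using hc
        · right; rw [hd_ins]; simpa using hc
      · rw [Finset.mem_singleton] at hw
        subst hw
        left; rw [hd_ins]; simp
  have hcs := card_slice (0 : Fin (n+1)) H'
  rw [hsf, hst, Finset.card_singleton] at hcs
  have hbf : slice (0 : Fin (n+1)) false (vBoundary (n+1) H') = vBoundary n H := by
    rw [slice_vB]
    simp only [Bool.not_false]
    rw [hsf, hst]
    have he : ({z₀} : Finset (V n)) \ H = ∅ := by
      rw [Finset.sdiff_eq_empty_iff_subset]; simpa using hz₀H
    rw [he, Finset.union_empty]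
  have hbt : slice (0 : Fin (n+1)) true (vBoundary (n+1) H') = H \ {z₀} := by
    rw [slice_vB]
    simp only [Bool.not_true]
    rw [hsf, hst, vB_singleton]
    apply Finset.Subset.antisymm
    · apply Finset.union_subset
      · intro w hw
        rw [mem_sph] at hw
        rw [Finset.mem_sdiff, Finset.mem_singleton]
        refine ⟨hball _ (le_of_eq hw), ?_⟩
        rintro rfl
        rw [hammingDist_self] at hw; omega
      · exact Finset.Subset.refl _
    · exact Finset.subset_union_right
  have hcsN := card_slice (0 : Fin (n+1)) (vBoundary (n+1) H')
  rw [hbf, hbt] at hcsN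
  have hcsd : (H \ {z₀}).card = H.card - 1 := by
    rw [Finset.card_sdiff_of_subset (by simpa using hz₀H), Finset.card_singleton]
  have hH1 : 1 ≤ H.card := Finset.card_pos.2 ⟨z₀, hz₀H⟩
  exact ⟨H', _, _, hInv, by omega, by omega⟩

lemma stepL {n : ℕ} {H : Finset (V n)} {z₀ z₁ : V n} (h : Inv n H z₀ z₁) :
    ∃ H' : Finset (V (n+1)), ∃ y₀ y₁ : V (n+1), Inv (n+1) H' y₀ y₁ ∧
      H'.card = H.card + 2 ∧
      (vBoundary (n+1) H').card + 2 = (vBoundary n H).card + 2*n := by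
  obtain ⟨hz01, hball, hcover⟩ := h
  have hz₀H : z₀ ∈ H := hball z₀ (by rw [hammingDist_self]; omega)
  have hz₁H : z₁ ∈ H := hball z₁ (le_of_eq hz01)
  have hzne : z₀ ≠ z₁ := by
    intro he; rw [he, hammingDist_self] at hz01; omega
  have hn1 : 1 ≤ n := by
    have hle := hammingDist_le_card_fintype (x := z₀) (y := z₁)
    simp only [Fintype.card_fin] at hle
    omega
  classical
  set H' := H.image (ins (0 : Fin (n+1)) false) ∪ {ins 0 true z₀, ins 0 true z₁} with hH'
  have hsf : slice (0 : Fin (n+1)) false H' = H := by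
    ext u
    rw [mem_slice, hH']
    simp only [Finset.mem_union, Finset.mem_image, Finset.mem_insert, Finset.mem_singleton]
    constructor
    · rintro (⟨x, hx, hxe⟩ | he | he)
      · rwa [← ins_inj hxe]
      · exact absurd he (fun he => ins_ne_bool he)
      · exact absurd he (fun he => ins_ne_bool he)
    · intro hu; exact Or.inl ⟨u, hu, rfl⟩
  have hst : slice (0 : Fin (n+1)) true H' = {z₀, z₁} := by
    ext u
    rw [mem_slice, hH']
    simp only [Finset.mem_union, Finset.mem_image, Finset.mem_insert, Finset.mem_singleton]
    constructor
    · rintro (⟨x, hx, hxe⟩ | he | he)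
      · exact absurd hxe (fun he => ins_ne_bool he)
      · exact Or.inl (ins_inj he)
      · exact Or.inr (ins_inj he)
    · rintro (rfl | rfl)
      · exact Or.inr (Or.inl rfl)
      · exact Or.inr (Or.inr rfl)
  have hInv : Inv (n+1) H' (ins 0 false z₀) (ins 0 false z₁) := by
    refine ⟨?_, ?_, ?_⟩
    · rw [hd_ins]; simp [hz01]
    · intro w hw
      cases h0 : w 0
      · have hrep : ins (0 : Fin (n+1)) false (tl 0 w) = w := by rw [← h0]; exact ins_tl 0 w
        rw [← hrep, hd_ins] at hw
        simp only [if_pos rfl] at hw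
        rw [hH', ← hrep]
        exact Finset.mem_union_left _ (Finset.mem_image.2 ⟨tl 0 w, hball _ (by omega), rfl⟩)
      · have hrep : ins (0 : Fin (n+1)) true (tl 0 w) = w := by rw [← h0]; exact ins_tl 0 w
        rw [← hrep, hd_ins] at hw
        simp only [Bool.false_eq_true, if_false] at hw
        have hd0 : hammingDist z₀ (tl 0 w) = 0 := by omega
        have htlz : z₀ = tl 0 w := hammingDist_eq_zero.1 hd0
        rw [hH', ← hrep, ← htlz]
        exact Finset.mem_union_right _ (Finset.mem_insert_self _ _)
    · intro w hw
      rw [hH'] at hw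
      rcases Finset.mem_union.1 hw with hw | hw
      · obtain ⟨u, hu, rfl⟩ := Finset.mem_image.1 hw
        rcases hcover u hu with hc | hc
        · left; rw [hd_ins]; simpa using hc
        · right; rw [hd_ins]; simpa using hc
      · rcases Finset.mem_insert.1 hw with rfl | hw
        · left; rw [hd_ins]; simp
        · rw [Finset.mem_singleton] at hw
          subst hw
          right; rw [hd_ins]; simp
  have hc2 : ({z₀, z₁} : Finset (V n)).card = 2 := by
    rw [Finset.card_insert_of_notMem (by simpa using hzne), Finset.card_singleton]
  have hcs := card_slice (0 : Fin (n+1)) H'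
  rw [hsf, hst, hc2] at hcs
  have hbf : slice (0 : Fin (n+1)) false (vBoundary (n+1) H') = vBoundary n H := by
    rw [slice_vB]
    simp only [Bool.not_false]
    rw [hsf, hst]
    have he : ({z₀, z₁} : Finset (V n)) \ H = ∅ := by
      rw [Finset.sdiff_eq_empty_iff_subset]
      intro x hx
      rcases Finset.mem_insert.1 hx with rfl | hx
      · exact hz₀H
      · rw [Finset.mem_singleton] at hx; subst hx; exact hz₁H
    rw [he, Finset.union_empty]
  have hbt : slice (0 : Fin (n+1)) true (vBoundary (n+1) H')
      = (sph z₀ ∪ sph z₁) \ {z₀, z₁} := by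
    rw [slice_vB]
    simp only [Bool.not_true]
    rw [hsf, hst, vB_pair]
    apply Finset.Subset.antisymm
    · apply Finset.union_subset (Finset.Subset.refl _)
      intro w hw
      rw [Finset.mem_sdiff] at hw ⊢
      obtain ⟨hwH, hwz⟩ := hw
      refine ⟨?_, hwz⟩
      simp only [Finset.mem_insert, Finset.mem_singleton] at hwz
      push_neg at hwz
      rcases hcover w hwH with hc | hc
      · apply Finset.mem_union_left
        rw [mem_sph]
        have : hammingDist z₀ w ≠ 0 := by
          intro h0
          exact hwz.1 (hammingDist_eq_zero.1 h0).symm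
        omega
      · exact Finset.mem_union_right _ (mem_sph.2 hc)
    · exact Finset.subset_union_left
  have hcsN := card_slice (0 : Fin (n+1)) (vBoundary (n+1) H')
  rw [hbf, hbt] at hcsN
  have hsub2 : ({z₀, z₁} : Finset (V n)) ⊆ sph z₀ ∪ sph z₁ := by
    intro x hx
    rcases Finset.mem_insert.1 hx with rfl | hx
    · exact Finset.mem_union_right _ (mem_sph.2 (by rwa [hammingDist_comm]))
    · rw [Finset.mem_singleton] at hx; subst hx
      exact Finset.mem_union_left _ (mem_sph.2 hz01)
  have hcu : (sph z₀ ∪ sph z₁).card = n + n := by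
    rw [Finset.card_union_of_disjoint (sph_disj hz01), card_sph, card_sph]
  have hcds : ((sph z₀ ∪ sph z₁) \ ({z₀, z₁} : Finset (V n))).card = n + n - 2 := by
    rw [Finset.card_sdiff_of_subset hsub2, hcu, hc2]
  exact ⟨H', _, _, hInv, by omega, by omega⟩

theorem upper : ∀ n : ℕ, 1 ≤ n → ∀ j : ℕ, j ≤ n - 1 →
    ∃ H : Finset (V n), ∃ z₀ z₁ : V n, Inv n H z₀ z₁ ∧ H.card = n+1+j ∧
      2 * ((vBoundary n H).card : ℤ) = G n (n+1+j) := by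
  intro n
  induction n with
  | zero => intro h; exact absurd h (by norm_num)
  | succ d IHn =>
    intro _ j hj
    by_cases hd0 : d = 0
    · subst hd0
      have hj0 : j = 0 := by omega
      subst hj0
      refine ⟨Finset.univ, (fun _ => false), (fun _ => true), by unfold Inv; decide, by decide, ?_⟩
      have hvb : (vBoundary 1 Finset.univ).card = 0 := by decide
      rw [hvb]
      norm_num [G]
    · have hd1 : 1 ≤ d := by omega
      cases j with
      | zero =>
        obtain ⟨H, z₀, z₁, hInv, hcard, hbd⟩ := IHn hd1 0 (by omega)
        obtain ⟨H', y₀, y₁, hInv', hcard', hbd'⟩ := stepD hInv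
        refine ⟨H', y₀, y₁, hInv', by omega, ?_⟩
        have hGd := Gd d (d+1+0) (by omega)
        have e : ((vBoundary (d+1) H').card : ℤ) + 1
            = ((vBoundary d H).card : ℤ) + ((d:ℤ)+1) := by omega
        have e2 : ((d:ℤ)+1+1+0 : ℤ) = ((d:ℤ)+1+0)+1 := by ring
        rw [show d+1+1+0 = (d+1+0)+1 from by omega, hGd]
        push_cast at hGd ⊢
        linarith
      | succ j' =>
        have hj' : j' ≤ d - 1 := by omega
        obtain ⟨H, z₀, z₁, hInv, hcard, hbd⟩ := IHn hd1 j' hj'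
        obtain ⟨H', y₀, y₁, hInv', hcard', hbd'⟩ := stepL hInv
        refine ⟨H', y₀, y₁, hInv', by omega, ?_⟩
        have hGl := Gl d (d+1+j') (by omega)
        have e : ((vBoundary (d+1) H').card : ℤ) + 2
            = ((vBoundary d H).card : ℤ) + 2*(d:ℤ) := by omega
        rw [show d+1+1+(j'+1) = (d+1+j')+2 from by omega, hGl]
        linarith

end HyperAux

theorem stmt7 (n m : ℕ) (h1 : n + 2 ≤ m) (h2 : m ≤ 2 * n - 1) :
    2 * (bv n m : ℤ) = -(m : ℤ)^2 + (4 * n - 3) * m - 2 * n^2 + 4 := by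
  have hn3 : 3 ≤ n := by omega
  obtain ⟨H, z₀, z₁, hInv, hcard, hbd⟩ := HyperAux.upper n (by omega) (m - n - 1) (by omega)
  have hmeq : n + 1 + (m - n - 1) = m := by omega
  rw [hmeq] at hcard hbd
  have hmem : (vBoundary n H).card ∈
      {k | ∃ H : Finset (Fin n → Bool), H.card = m ∧ (vBoundary n H).card = k} :=
    ⟨H, hcard, rfl⟩
  have hne : {k | ∃ H : Finset (Fin n → Bool), H.card = m ∧ (vBoundary n H).card = k}.Nonempty :=
    ⟨_, hmem⟩
  have hinf_mem : bv n m ∈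
      {k | ∃ H : Finset (Fin n → Bool), H.card = m ∧ (vBoundary n H).card = k} := by
    unfold bv; exact Nat.sInf_mem hne
  obtain ⟨H₂, hc2, hb2⟩ := hinf_mem
  have hle : bv n m ≤ (vBoundary n H).card := by
    unfold bv; exact Nat.sInf_le hmem
  have hlow := HyperAux.lower n m H₂ hc2 (by omega) (by omega)
  rw [hb2] at hlow
  have hG : HyperAux.G n m = -(m:ℤ)^2 + (4*(n:ℤ)-3)*m - 2*(n:ℤ)^2 + 4 :=
    HyperAux.G2 (by omega)
  have hfin : 2 * ((bv n m : ℕ) : ℤ) = HyperAux.G n m := by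
    have hle' : ((bv n m : ℕ) : ℤ) ≤ ((vBoundary n H).card : ℤ) := by exact_mod_cast hle
    linarith
  rw [hfin, hG]
end
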